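/- Let p ≥ 5 be a prime. Then H^{(2)}_{(p-1)/2} ≡ (7/3) p B_{p-3} (mod p^2), where H^{(2)}_m = Σ_{k=1}^m 1/k^2 and B_{p-3} is the (p-3)-rd Bernoulli number. -/

import Mathlib

open Finset

/-- `A ≡ B (mod p^e)` for rational numbers, in the p-adic sense: the difference can be
written as `p^e · a / b` with `b` an integer not divisible by `p`. -/
def ratCongr (A B : ℚ) (p : ℕ) (e : ℕ) : Prop :=
  ∃ a b : ℤ, ¬ (p : ℤ) ∣ b ∧ (A - B) * (b : ℚ) = (p : ℚ) ^ e * (a : ℚ)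

/-- The Pochhammer symbol (rising factorial) `(a)_k = a(a+1)⋯(a+k-1)` for rational `a`. -/
noncomputable def rpoch (a : ℚ) (k : ℕ) : ℚ := (ascPochhammer ℚ k).eval a

/-- The harmonic number of order 2: `H^{(2)}_m = Σ_{j=1}^m 1/j^2`. -/
def H2 (m : ℕ) : ℚ := ∑ j ∈ Finset.Icc 1 m, 1 / (j : ℚ) ^ 2

open PowerSeries Nat


lemma rescale_two_bps :
    rescale (2:ℚ) (bernoulliPowerSeries ℚ) * (exp ℚ + 1) = C (2:ℚ) * bernoulliPowerSeries ℚ := by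
  have hX : (exp ℚ - 1) ≠ 0 := by
    intro h
    have := PowerSeries.ext_iff.mp h 1
    simp [coeff_exp] at this
  apply mul_right_cancel₀ hX
  have h2 : exp ℚ ^ 2 = rescale (2:ℚ) (exp ℚ) := by
    have := exp_pow_eq_rescale_exp (A := ℚ) 2
    simpa using this
  calc rescale (2:ℚ) (bernoulliPowerSeries ℚ) * (exp ℚ + 1) * (exp ℚ - 1)
      = rescale (2:ℚ) (bernoulliPowerSeries ℚ) * (exp ℚ ^ 2 - 1) := by ring
    _ = rescale (2:ℚ) (bernoulliPowerSeries ℚ) * (rescale (2:ℚ) (exp ℚ) - 1) := by rw [h2]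
    _ = rescale (2:ℚ) (bernoulliPowerSeries ℚ * (exp ℚ - 1)) := by
        rw [map_mul, map_sub, map_one]
    _ = rescale (2:ℚ) X := by rw [bernoulliPowerSeries_mul_exp_sub_one]
    _ = C (2:ℚ) * X := by
        ext n
        simp [coeff_rescale, coeff_X, coeff_C_mul]
        
    _ = C (2:ℚ) * bernoulliPowerSeries ℚ * (exp ℚ - 1) := by
        rw [mul_assoc, bernoulliPowerSeries_mul_exp_sub_one]

lemma key_two (m : ℕ) :
    ∑ i ∈ range (m+1), (m.choose i : ℚ) * 2^i * bernoulli i = (2 - 2^m) * bernoulli m := by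
  have h := congrArg (fun f => coeff m f) rescale_two_bps
  simp only [coeff_C_mul] at h
  simp only [coeff_mul, coeff_rescale, bernoulliPowerSeries, coeff_mk,
    Algebra.algebraMap_self, RingHom.id_apply] at h
  rw [Nat.sum_antidiagonal_eq_sum_range_succ_mk] at h
  simp only [Nat.succ_eq_add_one] at h
  have hm : ∀ i ∈ range (m+1),
      2^(i, m-i).1 * (bernoulli (i, m-i).1 / (((i, m-i).1)! : ℚ)) * (coeff (i, m-i).2 (exp ℚ + 1))
      = 2^i * bernoulli i / ((i ! : ℚ) * ((m-i)! : ℚ)) + (if i = m then 2^m * bernoulli m / (m ! : ℚ) else 0) := by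
    intro i hi
    rw [mem_range] at hi
    have hi' : i ≤ m := Nat.lt_succ_iff.mp hi
    rcases eq_or_ne i m with rfl | hne
    · simp [coeff_exp, Nat.sub_self]
      ring
    · have hmi : m - i ≠ 0 := by omega
      simp [coeff_exp, map_add, hmi, hne]
      ring
  rw [sum_congr rfl hm, sum_add_distrib, sum_ite_eq' (range (m+1)) m] at h
  simp only [mem_range, Nat.lt_succ_iff, le_refl, if_true] at h
  have hfac : (m ! : ℚ) ≠ 0 := by exact_mod_cast m.factorial_ne_zero
  have h5 := congrArg (fun x => x * (m ! : ℚ)) h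
  simp only [add_mul, sum_mul] at h5
  have hterm : ∀ i ∈ range (m+1),
      2^i * bernoulli i / ((i ! : ℚ) * ((m-i)! : ℚ)) * (m ! : ℚ) = (m.choose i : ℚ) * 2^i * bernoulli i := by
    intro i hi
    rw [mem_range, Nat.lt_succ_iff] at hi
    rw [Nat.cast_choose ℚ hi]
    have h1 : (i ! : ℚ) ≠ 0 := by exact_mod_cast i.factorial_ne_zero
    have h2 : ((m - i)! : ℚ) ≠ 0 := by exact_mod_cast (m-i).factorial_ne_zero
    field_simp
  rw [sum_congr rfl hterm] at h5
  have h3 : 2^m * bernoulli m / (m ! : ℚ) * (m ! : ℚ) = 2^m * bernoulli m := by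
    field_simp
  have h4 : 2 * (bernoulli m / (m ! : ℚ)) * (m ! : ℚ) = 2 * bernoulli m := by
    field_simp
  rw [h3, h4] at h5
  linarith [h5]

lemma Vlem (m : ℕ) :
    ∑ i ∈ range m, (m.choose i : ℚ) * bernoulli i * (2:ℚ)⁻¹^(m-i)
      = (2 * (2:ℚ)⁻¹^m - 2) * bernoulli m := by
  have h := congrArg (fun x => x * (2:ℚ)⁻¹^m) (key_two m)
  simp only [sum_mul] at h
  rw [sum_range_succ] at h
  have hterm : ∀ i ∈ range m,
      (m.choose i : ℚ) * 2^i * bernoulli i * (2:ℚ)⁻¹^m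
        = (m.choose i : ℚ) * bernoulli i * (2:ℚ)⁻¹^(m-i) := by
    intro i hi
    rw [mem_range] at hi
    have : (2:ℚ)^i * (2:ℚ)⁻¹^m = (2:ℚ)⁻¹^(m-i) := by
      have h1 : m - i + i = m := by omega
      calc (2:ℚ)^i * (2:ℚ)⁻¹^m = (2:ℚ)^i * ((2:ℚ)⁻¹^(m-i) * (2:ℚ)⁻¹^i) := by
            rw [← pow_add, h1]
        _ = (2:ℚ)⁻¹^(m-i) * ((2:ℚ)^i * (2:ℚ)⁻¹^i) := by ring
        _ = (2:ℚ)⁻¹^(m-i) := by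
            rw [← mul_pow]
            norm_num
    calc (m.choose i : ℚ) * 2^i * bernoulli i * (2:ℚ)⁻¹^m
        = (m.choose i : ℚ) * bernoulli i * ((2:ℚ)^i * (2:ℚ)⁻¹^m) := by ring
      _ = _ := by rw [this]
  rw [sum_congr rfl hterm] at h
  have h2m : (2:ℚ)^m * (2:ℚ)⁻¹^m = 1 := by
    rw [← mul_pow]; norm_num
  have hlast : (m.choose m : ℚ) * 2^m * bernoulli m * (2:ℚ)⁻¹^m = bernoulli m := by
    rw [Nat.choose_self]
    push_cast
    calc (1:ℚ) * 2^m * bernoulli m * (2:ℚ)⁻¹^m = ((2:ℚ)^m * (2:ℚ)⁻¹^m) * bernoulli m := by ring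
      _ = bernoulli m := by rw [h2m]; ring
  rw [hlast] at h
  have hrhs : (2 - 2^m) * bernoulli m * (2:ℚ)⁻¹^m = (2 * (2:ℚ)⁻¹^m - 1) * bernoulli m := by
    have : (2 - (2:ℚ)^m) * (2:ℚ)⁻¹^m = 2 * (2:ℚ)⁻¹^m - 1 := by
      rw [sub_mul, h2m]
    calc (2 - 2^m) * bernoulli m * (2:ℚ)⁻¹^m = ((2 - (2:ℚ)^m) * (2:ℚ)⁻¹^m) * bernoulli m := by ring
      _ = _ := by rw [this]
  rw [hrhs] at h
  linarith [h]

section Helpers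
variable {p : ℕ} [hpf : Fact p.Prime]

lemma bern_odd_zero {n : ℕ} (h : Odd n) (hn : 1 < n) : bernoulli n = 0 := by
  rw [bernoulli_eq_bernoulli'_of_ne_one (by omega), bernoulli'_eq_zero_of_odd h hn]

lemma nqn (n : ℕ) : ‖(n : ℚ_[p])‖ ≤ 1 := by
  have := Padic.norm_int_le_one (p := p) (n : ℤ)
  push_cast at this; exact this

lemma nqn_dvd {n : ℕ} {m : ℕ} (h : p^m ∣ n) : ‖(n : ℚ_[p])‖ ≤ ((p:ℝ)⁻¹)^m := by
  have h' : (p:ℤ)^m ∣ (n:ℤ) := by exact_mod_cast h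
  have := (Padic.norm_int_le_pow_iff_dvd (p := p) (n:ℤ) m).mpr h'
  rw [zpow_neg, zpow_natCast, ← inv_pow] at this
  push_cast at this; exact this

lemma nqn_unit {n : ℕ} (h : ¬ p ∣ n) : ‖(n : ℚ_[p])‖ = 1 := by
  refine le_antisymm (nqn n) ?_
  by_contra hlt
  push_neg at hlt
  have h2 : ‖((n:ℤ) : ℚ_[p])‖ < 1 := by push_cast; exact hlt
  have := (Padic.norm_intCast_lt_one_iff (p := p) (k := (n:ℤ))).mp h2
  exact h (by exact_mod_cast this)

lemma nq_p' : ‖((p:ℕ) : ℚ_[p])‖ = (p:ℝ)⁻¹ := Padic.norm_p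

lemma fermat_norm {k : ℕ} (hk : ¬ p ∣ k) : ‖((k : ℚ_[p])^(p-1) - 1)‖ ≤ (p:ℝ)⁻¹ := by
  have hz : (p:ℤ)^1 ∣ ((k:ℤ)^(p-1) - 1) := by
    rw [pow_one]
    have h1 : ((k : ZMod p)) ≠ 0 := by
      rw [Ne, ZMod.natCast_eq_zero_iff]; exact hk
    have h2 : (k : ZMod p)^(p-1) = 1 := ZMod.pow_card_sub_one_eq_one h1
    have : ((((k:ℤ)^(p-1) - 1 : ℤ)) : ZMod p) = 0 := by push_cast [h2]; ring
    exact_mod_cast (ZMod.intCast_zmod_eq_zero_iff_dvd _ p).mp this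
  have := (Padic.norm_int_le_pow_iff_dvd (p := p) ((k:ℤ)^(p-1) - 1) 1).mpr hz
  rw [zpow_neg, zpow_natCast, pow_one] at this
  push_cast at this
  exact this

lemma bern_int (hp5 : 5 ≤ p) : ∀ i, i ≤ 2*p - 4 →
    ‖((bernoulli i : ℚ) : ℚ_[p])‖ ≤ if i = p - 1 then (p:ℝ) else 1 := by
  intro i
  induction i using Nat.strong_induction_on with
  | _ i IH =>
    intro hi
    rcases Nat.eq_zero_or_pos i with rfl | hi1
    · simp only [bernoulli_zero]
      rw [if_neg (by omega)]
      simpa using nqn (p := p) 1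
    have hrec : ((i+1 : ℕ) : ℚ) * bernoulli i
        = - ∑ k ∈ range i, ((i+1).choose k : ℚ) * bernoulli k := by
      have hs := sum_bernoulli (i+1)
      rw [if_neg (by omega), sum_range_succ, Nat.choose_succ_self_right] at hs
      push_cast at hs ⊢
      linarith [hs]
    have hsum : ‖((∑ k ∈ range i, ((i+1).choose k : ℚ) * bernoulli k : ℚ) : ℚ_[p])‖ ≤ 1 := by
      rw [Rat.cast_sum]
      apply IsUltrametricDist.norm_sum_le_of_forall_le_of_nonneg zero_le_one
      intro k hk
      rw [mem_range] at hk
      rw [Rat.cast_mul, norm_mul, Rat.cast_natCast]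
      rcases eq_or_ne k (p-1) with rfl | hne
      · have hdvd : p ∣ (i+1).choose (p-1) :=
          Nat.Prime.dvd_choose hpf.out (by omega) (by omega) (by omega)
        have h1 : ‖(((i+1).choose (p-1) : ℕ) : ℚ_[p])‖ ≤ (p:ℝ)⁻¹ := by
          have := nqn_dvd (p := p) (m := 1) (by simpa using hdvd)
          rwa [pow_one] at this
        have h2 : ‖((bernoulli (p-1) : ℚ) : ℚ_[p])‖ ≤ (p:ℝ) := by
          have := IH (p-1) hk (by omega)
          rwa [if_pos rfl] at this
        have hp0 : (0:ℝ) < (p:ℝ) := by exact_mod_cast hpf.out.pos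
        calc ‖(((i+1).choose (p-1) : ℕ) : ℚ_[p])‖ * ‖((bernoulli (p-1) : ℚ) : ℚ_[p])‖
            ≤ (p:ℝ)⁻¹ * (p:ℝ) := mul_le_mul h1 h2 (norm_nonneg _) (by positivity)
          _ = 1 := by field_simp
      · have h1 : ‖(((i+1).choose k : ℕ) : ℚ_[p])‖ ≤ 1 := nqn _
        have h2 : ‖((bernoulli k : ℚ) : ℚ_[p])‖ ≤ 1 := by
          have := IH k hk (by omega)
          rwa [if_neg hne] at this
        calc ‖(((i+1).choose k : ℕ) : ℚ_[p])‖ * ‖((bernoulli k : ℚ) : ℚ_[p])‖ ≤ 1 * 1 :=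
              mul_le_mul h1 h2 (norm_nonneg _) zero_le_one
          _ = 1 := by norm_num
    have hnorm_eq : ‖(((i+1:ℕ) : ℕ) : ℚ_[p])‖ * ‖((bernoulli i : ℚ) : ℚ_[p])‖ ≤ 1 := by
      have : (((i+1:ℕ) : ℕ) : ℚ_[p]) * ((bernoulli i : ℚ) : ℚ_[p])
          = ((((i+1 : ℕ) : ℚ) * bernoulli i : ℚ) : ℚ_[p]) := by push_cast; ring
      rw [← norm_mul, this, hrec, Rat.cast_neg, norm_neg]
      exact hsum
    rcases eq_or_ne i (p-1) with rfl | hne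
    · rw [if_pos rfl]
      have hp1 : ((p - 1 + 1 : ℕ) : ℚ_[p]) = ((p:ℕ) : ℚ_[p]) := by
        congr 1; omega
      rw [hp1, nq_p'] at hnorm_eq
      have hp0 : (0:ℝ) < (p:ℝ) := by exact_mod_cast hpf.out.pos
      calc ‖((bernoulli (p-1) : ℚ) : ℚ_[p])‖
          = ((p:ℝ)⁻¹ * ‖((bernoulli (p-1) : ℚ) : ℚ_[p])‖) * (p:ℝ) := by field_simp
        _ ≤ 1 * (p:ℝ) := mul_le_mul_of_nonneg_right hnorm_eq (by positivity)
        _ = (p:ℝ) := by ring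
    · rw [if_neg hne]
      have hd : ¬ p ∣ (i+1) := by
        rintro ⟨c, hc⟩
        have hc2 : c = 0 ∨ c = 1 ∨ 2 ≤ c := by omega
        rcases hc2 with rfl | rfl | hc2
        · omega
        · omega
        · have : p * 2 ≤ p * c := Nat.mul_le_mul_left p hc2
          omega
      rw [nqn_unit hd, one_mul] at hnorm_eq
      exact hnorm_eq

end Helpers

section Faul
variable {p : ℕ} [hpf : Fact p.Prime]

lemma pinv_le_one : ((p:ℝ)⁻¹) ≤ 1 := by
  have h1 : (1:ℝ) ≤ (p:ℝ) := by exact_mod_cast hpf.out.one_lt.le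
  rw [inv_le_one_iff₀]; right; exact h1

lemma pinv_pos : (0:ℝ) < (p:ℝ)⁻¹ := by
  have : (0:ℝ) < (p:ℝ) := by exact_mod_cast hpf.out.pos
  positivity

lemma full_gen (n : ℕ) (hn : 2 ≤ n) (hnp : ¬ p ∣ (n+1))
    (hcoef : ∀ i ∈ range n,
      ‖((bernoulli i * (((n+1).choose i : ℕ) : ℚ) : ℚ) : ℚ_[p])‖ * ((p:ℝ)⁻¹)^(n+1-i)
        ≤ ((p:ℝ)⁻¹)^2) :
    ‖((∑ k ∈ range p, (k:ℚ)^n - p * bernoulli n : ℚ) : ℚ_[p])‖ ≤ ((p:ℝ)⁻¹)^2 := by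
  have hid : (∑ k ∈ range p, (k:ℚ)^n - p * bernoulli n : ℚ)
      = ∑ i ∈ range n, bernoulli i * (((n+1).choose i : ℕ) : ℚ) * (p:ℚ)^(n+1-i) / (n+1) := by
    have h := sum_range_pow p n
    rw [sum_range_succ] at h
    have hlast : bernoulli n * (((n+1).choose n : ℕ) : ℚ) * (p:ℚ)^(n+1-n) / (n+1)
        = (p:ℚ) * bernoulli n := by
      rw [Nat.choose_succ_self_right]
      have h1 : n + 1 - n = 1 := by omega
      rw [h1, pow_one]
      have h2 : ((n+1 : ℕ) : ℚ) ≠ 0 := by positivity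
      push_cast
      field_simp
    rw [hlast] at h
    rw [h]; ring
  rw [hid, Rat.cast_sum]
  apply IsUltrametricDist.norm_sum_le_of_forall_le_of_nonneg (by positivity)
  intro i hi
  have hi' := mem_range.mp hi
  have hcast : ((bernoulli i * (((n+1).choose i : ℕ) : ℚ) * (p:ℚ)^(n+1-i) / (n+1) : ℚ) : ℚ_[p])
      = ((bernoulli i * (((n+1).choose i : ℕ) : ℚ) : ℚ) : ℚ_[p]) * ((p:ℕ) : ℚ_[p])^(n+1-i) / (((n+1:ℕ) : ℕ) : ℚ_[p]) := by
    push_cast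
    ring
  rw [hcast]
  have hdenom : ‖(((n+1:ℕ) : ℕ) : ℚ_[p])‖ = 1 := nqn_unit hnp
  rw [norm_div, norm_mul, norm_pow, hdenom, nq_p', div_one]
  exact hcoef i hi

end Faul

section Half
variable {p : ℕ} [hpf : Fact p.Prime]

lemma norm_two_inv_pow (hp5 : 5 ≤ p) (t : ℕ) : ‖(((2:ℚ)⁻¹^t : ℚ) : ℚ_[p])‖ = 1 := by
  have h2 : ‖((2:ℕ) : ℚ_[p])‖ = 1 := nqn_unit (by
    intro h; have := Nat.le_of_dvd (by norm_num) h; omega)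
  have : (((2:ℚ)⁻¹^t : ℚ) : ℚ_[p]) = (((2:ℕ) : ℚ_[p]))⁻¹^t := by push_cast; ring
  rw [this, norm_pow, norm_inv, h2]
  norm_num

lemma one_add_p_pow_dvd (t : ℕ) : (p:ℤ)^2 ∣ ((1+p:ℤ)^t - 1 - t*p) := by
  induction t with
  | zero => simp
  | succ t ih =>
    have heq : ((1+p:ℤ))^(t+1) - 1 - ((t+1:ℕ):ℤ)*p
        = ((1+p:ℤ)^t - 1 - t*p) * (1+p) + t*p^2 := by push_cast; ring
    rw [heq]
    exact dvd_add (Dvd.dvd.mul_right ih _) ⟨t, by ring⟩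

lemma Epow_norm (t : ℕ) : ‖(((1+p:ℚ)^t - 1 - t*p : ℚ) : ℚ_[p])‖ ≤ ((p:ℝ)⁻¹)^2 := by
  have h := one_add_p_pow_dvd (p := p) t
  have h2 : (((1+p:ℚ)^t - 1 - t*p : ℚ)) = (((1+p:ℤ)^t - 1 - t*p : ℤ) : ℚ) := by push_cast; ring
  rw [h2, Rat.cast_intCast]
  have := (Padic.norm_int_le_pow_iff_dvd (p := p) ((1+p:ℤ)^t - 1 - t*p) 2).mpr h
  rwa [zpow_neg, zpow_natCast, ← inv_pow] at this

lemma choose_deriv {N : ℕ} (hN : 1 ≤ N) (i : ℕ) :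
    N * ((N-1).choose i) = N.choose i * (N - i) := by
  have h1 := Nat.choose_succ_right_eq N i
  have h2 := Nat.add_one_mul_choose_eq (N-1) i
  have h3 : (N-1).succ = N := by omega
  rw [show N - 1 + 1 = N by omega] at h2
  rw [h2, h1]

lemma half_gen (hp5 : 5 ≤ p) (N : ℕ) (hN : 3 ≤ N) (hodd : Odd N) (hnp : ¬ p ∣ N)
    (hcoef : ∀ i ∈ range N, ‖((((N.choose i : ℕ) : ℚ) * bernoulli i : ℚ) : ℚ_[p])‖ ≤ 1) :
    ‖((∑ k ∈ range ((p+1)/2), (k:ℚ)^(N-1)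
        - p * 2⁻¹ * (2*(2:ℚ)⁻¹^(N-1) - 1) * bernoulli (N-1) : ℚ) : ℚ_[p])‖
      ≤ ((p:ℝ)⁻¹)^2 := by
  set M : ℕ := (p+1)/2 with hMdef
  have hModd : Odd p := hpf.out.odd_of_ne_two (by omega)
  have hM2 : (M:ℚ) = 2⁻¹ * (1+p) := by
    obtain ⟨r, hr⟩ := hModd
    have h1 : 2 * M = p + 1 := by
      rw [hMdef]; omega
    have h2 : ((2 * M : ℕ) : ℚ) = ((p + 1 : ℕ) : ℚ) := by rw [h1]
    push_cast at h2
    linarith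
  -- Faulhaber
  have hN1 : N - 1 + 1 = N := by omega
  have hfa : ∑ k ∈ range M, (k:ℚ)^(N-1)
      = ∑ i ∈ range N, bernoulli i * ((N.choose i : ℕ) : ℚ) * (M:ℚ)^(N-i) / N := by
    have h := sum_range_pow M (N-1)
    simp only [hN1] at h
    have hcst : ((N-1:ℕ):ℚ) + 1 = ((N:ℕ):ℚ) := by
      rw [Nat.cast_sub (by omega : 1 ≤ N)]; push_cast; ring
    rw [hcst] at h
    exact h
  -- decomposition of each term
  have hdecomp : ∀ i ∈ range N,
      bernoulli i * ((N.choose i : ℕ) : ℚ) * (M:ℚ)^(N-i)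
        = ((N.choose i : ℕ) : ℚ) * bernoulli i * (2:ℚ)⁻¹^(N-i)
          + p * (((N.choose i : ℕ) : ℚ) * bernoulli i * (((N-i : ℕ)) : ℚ) * (2:ℚ)⁻¹^(N-i))
          + ((N.choose i : ℕ) : ℚ) * bernoulli i * (2:ℚ)⁻¹^(N-i)
              * ((1+p:ℚ)^(N-i) - 1 - ((N-i : ℕ) : ℚ)*p) := by
    intro i hi
    have : (M:ℚ)^(N-i) = (2:ℚ)⁻¹^(N-i) * (1+p:ℚ)^(N-i) := by
      rw [hM2, mul_pow]
    rw [this]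
    ring
  rw [hfa]
  have hsum_eq : ∑ i ∈ range N, bernoulli i * ((N.choose i : ℕ) : ℚ) * (M:ℚ)^(N-i) / N
      = (∑ i ∈ range N, bernoulli i * ((N.choose i : ℕ) : ℚ) * (M:ℚ)^(N-i)) / N := by
    rw [sum_div]
  -- S1 = 0
  have hS1 : ∑ i ∈ range N, ((N.choose i : ℕ) : ℚ) * bernoulli i * (2:ℚ)⁻¹^(N-i) = 0 := by
    rw [Vlem N, bern_odd_zero hodd (by omega), mul_zero]
  -- S2
  have hS2 : ∑ i ∈ range N, ((N.choose i : ℕ) : ℚ) * bernoulli i * (((N-i : ℕ)) : ℚ) * (2:ℚ)⁻¹^(N-i)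
      = (N:ℚ) * 2⁻¹ * (2*(2:ℚ)⁻¹^(N-1) - 1) * bernoulli (N-1) := by
    have hterm : ∀ i ∈ range N,
        ((N.choose i : ℕ) : ℚ) * bernoulli i * (((N-i : ℕ)) : ℚ) * (2:ℚ)⁻¹^(N-i)
          = (N:ℚ) * (((N-1).choose i : ℕ) : ℚ) * bernoulli i * (2⁻¹ * (2:ℚ)⁻¹^(N-1-i)) := by
      intro i hi
      have hi' := mem_range.mp hi
      have hc : ((N.choose i : ℕ) : ℚ) * (((N-i : ℕ)) : ℚ) = (N:ℚ) * (((N-1).choose i : ℕ) : ℚ) := by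
        have := choose_deriv (by omega : 1 ≤ N) i
        have hcast := congrArg (fun x : ℕ => (x : ℚ)) this.symm
        push_cast at hcast
        linarith
      have hp2 : (2:ℚ)⁻¹^(N-i) = 2⁻¹ * (2:ℚ)⁻¹^(N-1-i) := by
        have h1 : N - i = (N-1-i) + 1 := by omega
        rw [h1, pow_succ]
        ring
      calc ((N.choose i : ℕ) : ℚ) * bernoulli i * (((N-i : ℕ)) : ℚ) * (2:ℚ)⁻¹^(N-i)
          = (((N.choose i : ℕ) : ℚ) * (((N-i : ℕ)) : ℚ)) * bernoulli i * (2:ℚ)⁻¹^(N-i) := by ring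
        _ = ((N:ℚ) * (((N-1).choose i : ℕ) : ℚ)) * bernoulli i * (2:ℚ)⁻¹^(N-i) := by rw [hc]
        _ = _ := by rw [hp2]; try ring
    rw [sum_congr rfl hterm]
    have hfact : ∑ i ∈ range N, (N:ℚ) * (((N-1).choose i : ℕ) : ℚ) * bernoulli i * (2⁻¹ * (2:ℚ)⁻¹^(N-1-i))
        = (N:ℚ) * 2⁻¹ * (∑ i ∈ range N, (((N-1).choose i : ℕ) : ℚ) * bernoulli i * (2:ℚ)⁻¹^(N-1-i)) := by
      rw [mul_sum]
      apply sum_congr rfl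
      intro i _
      ring
    rw [hfact]
    have hrangeN : N = (N-1) + 1 := by omega
    have hinner : ∑ i ∈ range N, (((N-1).choose i : ℕ) : ℚ) * bernoulli i * (2:ℚ)⁻¹^(N-1-i)
        = (2*(2:ℚ)⁻¹^(N-1) - 1) * bernoulli (N-1) := by
      rw [hrangeN, sum_range_succ]
      simp only [Nat.add_sub_cancel]
      have h0 : ∑ i ∈ range (N-1), (((N-1).choose i : ℕ) : ℚ) * bernoulli i * (2:ℚ)⁻¹^(N-1-i)
          = (2 * (2:ℚ)⁻¹^(N-1) - 2) * bernoulli (N-1) := Vlem (N-1)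
      rw [h0, Nat.choose_self, Nat.sub_self, pow_zero]
      push_cast
      ring
    rw [hinner]
    ring
  -- assemble
  have hbig : ∑ i ∈ range N, bernoulli i * ((N.choose i : ℕ) : ℚ) * (M:ℚ)^(N-i)
      = (p:ℚ) * ((N:ℚ) * 2⁻¹ * (2*(2:ℚ)⁻¹^(N-1) - 1) * bernoulli (N-1))
        + ∑ i ∈ range N, ((N.choose i : ℕ) : ℚ) * bernoulli i * (2:ℚ)⁻¹^(N-i)
            * ((1+p:ℚ)^(N-i) - 1 - ((N-i : ℕ) : ℚ)*p) := by
    rw [sum_congr rfl hdecomp, sum_add_distrib, sum_add_distrib, hS1, ← mul_sum, hS2]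
    ring
  have hNne : ((N:ℕ) : ℚ) ≠ 0 := by
    have : 0 < N := by omega
    positivity
  have hdiff : ∑ i ∈ range N, bernoulli i * ((N.choose i : ℕ) : ℚ) * (M:ℚ)^(N-i) / N
      - p * 2⁻¹ * (2*(2:ℚ)⁻¹^(N-1) - 1) * bernoulli (N-1)
      = (∑ i ∈ range N, ((N.choose i : ℕ) : ℚ) * bernoulli i * (2:ℚ)⁻¹^(N-i)
            * ((1+p:ℚ)^(N-i) - 1 - ((N-i : ℕ) : ℚ)*p)) / N := by
    rw [hsum_eq, hbig]
    field_simp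
    ring
  rw [hdiff]
  -- norm bound
  have hNnorm : ‖(((N:ℕ) : ℚ) : ℚ_[p])‖ = 1 := by
    have := nqn_unit (p := p) hnp
    push_cast at this ⊢
    exact this
  rw [Rat.cast_div, norm_div]
  rw [show (((N:ℕ):ℚ) : ℚ_[p]) = (((N:ℕ) : ℚ) : ℚ_[p]) by norm_cast, hNnorm, div_one]
  rw [Rat.cast_sum]
  apply IsUltrametricDist.norm_sum_le_of_forall_le_of_nonneg (by positivity)
  intro i hi
  rw [Rat.cast_mul, norm_mul, Rat.cast_mul, norm_mul]
  have h1 : ‖((((N.choose i : ℕ) : ℚ) * bernoulli i : ℚ) : ℚ_[p])‖ ≤ 1 := hcoef i hi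
  have h2 : ‖(((2:ℚ)⁻¹^(N-i) : ℚ) : ℚ_[p])‖ = 1 := norm_two_inv_pow hp5 (N-i)
  have h3 : ‖(((1+p:ℚ)^(N-i) - 1 - ((N-i : ℕ) : ℚ)*p : ℚ) : ℚ_[p])‖ ≤ ((p:ℝ)⁻¹)^2 :=
    Epow_norm (N-i)
  calc ‖((((N.choose i : ℕ) : ℚ) * bernoulli i : ℚ) : ℚ_[p])‖ * ‖(((2:ℚ)⁻¹^(N-i) : ℚ) : ℚ_[p])‖
        * ‖(((1+p:ℚ)^(N-i) - 1 - ((N-i : ℕ) : ℚ)*p : ℚ) : ℚ_[p])‖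
      ≤ 1 * 1 * ((p:ℝ)⁻¹)^2 := by
        have hb : ‖((((N.choose i : ℕ) : ℚ) * bernoulli i : ℚ) : ℚ_[p])‖ * ‖(((2:ℚ)⁻¹^(N-i) : ℚ) : ℚ_[p])‖ ≤ 1 * 1 := by
          rw [h2]
          exact mul_le_mul_of_nonneg_right h1 zero_le_one
        apply mul_le_mul hb h3 (norm_nonneg _) (by norm_num)
    _ = ((p:ℝ)⁻¹)^2 := by ring
end Half

section Inst
variable {p : ℕ} [hpf : Fact p.Prime]

lemma hndvd_sub (hp5 : 5 ≤ p) {a : ℕ} (h1 : 0 < a) (h2 : a < p) : ¬ p ∣ a := by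
  intro h
  exact absurd (Nat.le_of_dvd h1 h) (by omega)

lemma two_pow_fermat (hp5 : 5 ≤ p) : ‖((1 - (2:ℚ)^(p-1) : ℚ) : ℚ_[p])‖ ≤ (p:ℝ)⁻¹ := by
  have h2 : ¬ p ∣ 2 := by
    intro h; have := Nat.le_of_dvd (by norm_num) h; omega
  have hf := fermat_norm (p := p) h2
  have : ((1 - (2:ℚ)^(p-1) : ℚ) : ℚ_[p]) = -(((2:ℕ) : ℚ_[p])^(p-1) - 1) := by
    push_cast; ring
  rw [this, norm_neg]
  exact hf

lemma x7_norm1 (hp5 : 5 ≤ p) :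
    ‖((2*(2:ℚ)⁻¹^(p-3) - 1 - 7 : ℚ) : ℚ_[p])‖ ≤ (p:ℝ)⁻¹ := by
  have h1 : (2:ℚ)^(p-1) = 2^(p-3) * 4 := by
    have : p - 1 = (p-3) + 2 := by omega
    rw [this, pow_add]; norm_num
  have h2 : (2:ℚ)⁻¹^(p-3) * 2^(p-3) = 1 := by
    rw [← mul_pow]; norm_num
  have hx : (2*(2:ℚ)⁻¹^(p-3) - 1 - 7 : ℚ) = 2*(2:ℚ)⁻¹^(p-3) * (1 - 2^(p-1)) := by
    linear_combination 2 * (2:ℚ)⁻¹^(p-3) * h1 + 8 * h2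
  rw [hx, Rat.cast_mul, norm_mul, Rat.cast_mul, norm_mul]
  have hn2 : ‖((2:ℚ) : ℚ_[p])‖ = 1 := by
    have := nqn_unit (p := p) (n := 2) (by intro h; have := Nat.le_of_dvd (by norm_num) h; omega)
    push_cast at this ⊢; exact this
  have hninv : ‖(((2:ℚ)⁻¹^(p-3) : ℚ) : ℚ_[p])‖ = 1 := norm_two_inv_pow hp5 _
  rw [hn2, hninv, one_mul, one_mul]
  exact two_pow_fermat hp5

lemma x7_norm2 (hp5 : 5 ≤ p) :
    ‖((2*(2:ℚ)⁻¹^(2*p-4) - 1 - 7 : ℚ) : ℚ_[p])‖ ≤ (p:ℝ)⁻¹ := by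
  have h1 : (2:ℚ)^(2*p-2) = 2^(2*p-4) * 4 := by
    have : 2*p - 2 = (2*p-4) + 2 := by omega
    rw [this, pow_add]; norm_num
  have h2 : (2:ℚ)⁻¹^(2*p-4) * 2^(2*p-4) = 1 := by
    rw [← mul_pow]; norm_num
  have hx : (2*(2:ℚ)⁻¹^(2*p-4) - 1 - 7 : ℚ) = 2*(2:ℚ)⁻¹^(2*p-4) * (1 - 2^(2*p-2)) := by
    linear_combination 2 * (2:ℚ)⁻¹^(2*p-4) * h1 + 8 * h2
  have hsq : (1 - (2:ℚ)^(2*p-2)) = (1 - 2^(p-1)) * (1 + 2^(p-1)) := by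
    have : 2*p - 2 = (p-1) * 2 := by omega
    rw [this, pow_mul]
    ring
  rw [hx, hsq, Rat.cast_mul, norm_mul, Rat.cast_mul, norm_mul, Rat.cast_mul, norm_mul]
  have hn2 : ‖((2:ℚ) : ℚ_[p])‖ = 1 := by
    have := nqn_unit (p := p) (n := 2) (by intro h; have := Nat.le_of_dvd (by norm_num) h; omega)
    push_cast at this ⊢; exact this
  have hninv : ‖(((2:ℚ)⁻¹^(2*p-4) : ℚ) : ℚ_[p])‖ = 1 := norm_two_inv_pow hp5 _
  have hplus : ‖((1 + (2:ℚ)^(p-1) : ℚ) : ℚ_[p])‖ ≤ 1 := by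
    have : ((1 + (2:ℚ)^(p-1) : ℚ) : ℚ_[p]) = (((1 + 2^(p-1) : ℕ) : ℤ) : ℚ_[p]) := by push_cast; ring
    rw [this]
    exact Padic.norm_int_le_one _
  rw [hn2, hninv, one_mul, one_mul]
  calc ‖((1 - (2:ℚ)^(p-1) : ℚ) : ℚ_[p])‖ * ‖((1 + (2:ℚ)^(p-1) : ℚ) : ℚ_[p])‖
      ≤ (p:ℝ)⁻¹ * 1 := mul_le_mul (two_pow_fermat hp5) hplus (norm_nonneg _) pinv_pos.le
    _ = (p:ℝ)⁻¹ := by ring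

lemma F1_cong (hp5 : 5 ≤ p) :
    ‖((∑ k ∈ range p, (k:ℚ)^(p-3) - p * bernoulli (p-3) : ℚ) : ℚ_[p])‖ ≤ ((p:ℝ)⁻¹)^2 := by
  apply full_gen (p-3) (by omega)
  · have : p - 3 + 1 = p - 2 := by omega
    rw [this]
    exact hndvd_sub hp5 (by omega) (by omega)
  · intro i hi
    have hi' := mem_range.mp hi
    have hb : ‖((bernoulli i : ℚ) : ℚ_[p])‖ ≤ 1 := by
      have := bern_int hp5 i (by omega)
      rwa [if_neg (by omega)] at this
    have hc : ‖((((p-3+1).choose i : ℕ) : ℚ) : ℚ_[p])‖ ≤ 1 := by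
      rw [Rat.cast_natCast]; exact nqn _
    have hbc : ‖((bernoulli i * (((p-3+1).choose i : ℕ) : ℚ) : ℚ) : ℚ_[p])‖ ≤ 1 := by
      rw [Rat.cast_mul, norm_mul]
      calc ‖((bernoulli i : ℚ) : ℚ_[p])‖ * ‖((((p-3+1).choose i : ℕ) : ℚ) : ℚ_[p])‖
          ≤ 1 * 1 := mul_le_mul hb hc (norm_nonneg _) zero_le_one
        _ = 1 := by norm_num
    have hexp : ((p:ℝ)⁻¹)^(p-3+1-i) ≤ ((p:ℝ)⁻¹)^2 :=
      pow_le_pow_of_le_one pinv_pos.le pinv_le_one (by omega)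
    calc ‖((bernoulli i * (((p-3+1).choose i : ℕ) : ℚ) : ℚ) : ℚ_[p])‖ * ((p:ℝ)⁻¹)^(p-3+1-i)
        ≤ 1 * ((p:ℝ)⁻¹)^2 := mul_le_mul hbc hexp (by positivity) zero_le_one
      _ = ((p:ℝ)⁻¹)^2 := by ring

lemma F2_cong (hp5 : 5 ≤ p) :
    ‖((∑ k ∈ range p, (k:ℚ)^(2*p-4) - p * bernoulli (2*p-4) : ℚ) : ℚ_[p])‖ ≤ ((p:ℝ)⁻¹)^2 := by
  apply full_gen (2*p-4) (by omega)
  · have h1 : 2*p - 4 + 1 = 2*p - 3 := by omega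
    rw [h1]
    intro h
    have h2 : p ∣ (2*p - 3) - p := Nat.dvd_sub h ⟨1, by ring⟩
    have h3 : (2*p-3) - p = p - 3 := by omega
    rw [h3] at h2
    exact absurd (Nat.le_of_dvd (by omega) h2) (by omega)
  · intro i hi
    have hi' := mem_range.mp hi
    have hexp : ((p:ℝ)⁻¹)^(2*p-4+1-i) ≤ ((p:ℝ)⁻¹)^2 :=
      pow_le_pow_of_le_one pinv_pos.le pinv_le_one (by omega)
    have hbc : ‖((bernoulli i * (((2*p-4+1).choose i : ℕ) : ℚ) : ℚ) : ℚ_[p])‖ ≤ 1 := by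
      rw [Rat.cast_mul, norm_mul]
      rcases eq_or_ne i (p-1) with rfl | hne
      · have hb : ‖((bernoulli (p-1) : ℚ) : ℚ_[p])‖ ≤ (p:ℝ) := by
          have := bern_int hp5 (p-1) (by omega)
          rwa [if_pos rfl] at this
        have hdvd : p ∣ (2*p-4+1).choose (p-1) :=
          Nat.Prime.dvd_choose hpf.out (by omega) (by omega) (by omega)
        have hc : ‖((((2*p-4+1).choose (p-1) : ℕ) : ℚ) : ℚ_[p])‖ ≤ (p:ℝ)⁻¹ := by
          rw [Rat.cast_natCast]
          have := nqn_dvd (p := p) (m := 1) (by simpa using hdvd)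
          rwa [pow_one] at this
        calc ‖((bernoulli (p-1) : ℚ) : ℚ_[p])‖ * ‖((((2*p-4+1).choose (p-1) : ℕ) : ℚ) : ℚ_[p])‖
            ≤ (p:ℝ) * (p:ℝ)⁻¹ :=
              mul_le_mul hb hc (norm_nonneg _) (by positivity)
          _ = 1 := by
              field_simp
      · have hb : ‖((bernoulli i : ℚ) : ℚ_[p])‖ ≤ 1 := by
          have := bern_int hp5 i (by omega)
          rwa [if_neg hne] at this
        have hc : ‖((((2*p-4+1).choose i : ℕ) : ℚ) : ℚ_[p])‖ ≤ 1 := by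
          rw [Rat.cast_natCast]; exact nqn _
        calc ‖((bernoulli i : ℚ) : ℚ_[p])‖ * ‖((((2*p-4+1).choose i : ℕ) : ℚ) : ℚ_[p])‖
            ≤ 1 * 1 := mul_le_mul hb hc (norm_nonneg _) zero_le_one
          _ = 1 := by norm_num
    calc ‖((bernoulli i * (((2*p-4+1).choose i : ℕ) : ℚ) : ℚ) : ℚ_[p])‖ * ((p:ℝ)⁻¹)^(2*p-4+1-i)
        ≤ 1 * ((p:ℝ)⁻¹)^2 := mul_le_mul hbc hexp (by positivity) zero_le_one
      _ = ((p:ℝ)⁻¹)^2 := by ring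

end Inst

section Inst2
variable {p : ℕ} [hpf : Fact p.Prime]

lemma norm_two_inv (hp5 : 5 ≤ p) : ‖(((2:ℚ)⁻¹ : ℚ) : ℚ_[p])‖ = 1 := by
  have := norm_two_inv_pow (p := p) hp5 1
  rwa [pow_one] at this

lemma A1_cong (hp5 : 5 ≤ p) :
    ‖((∑ k ∈ range ((p+1)/2), (k:ℚ)^(p-3) - 7/2 * p * bernoulli (p-3) : ℚ) : ℚ_[p])‖
      ≤ ((p:ℝ)⁻¹)^2 := by
  have hB : ‖((bernoulli (p-3) : ℚ) : ℚ_[p])‖ ≤ 1 := by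
    have := bern_int hp5 (p-3) (by omega)
    rwa [if_neg (by omega)] at this
  have hodd : Odd (p-2) := by
    obtain ⟨r, hr⟩ := hpf.out.odd_of_ne_two (by omega)
    exact ⟨r-1, by omega⟩
  have hg := half_gen hp5 (p-2) (by omega) hodd (hndvd_sub hp5 (by omega) (by omega)) ?hc
  case hc =>
    intro i hi
    have hi' := mem_range.mp hi
    rw [Rat.cast_mul, norm_mul, Rat.cast_natCast]
    have hb : ‖((bernoulli i : ℚ) : ℚ_[p])‖ ≤ 1 := by
      have := bern_int hp5 i (by omega)
      rwa [if_neg (by omega)] at this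
    calc ‖(((p-2).choose i : ℕ) : ℚ_[p])‖ * ‖((bernoulli i : ℚ) : ℚ_[p])‖
        ≤ 1 * 1 := mul_le_mul (nqn _) hb (norm_nonneg _) zero_le_one
      _ = 1 := by norm_num
  rw [show p - 2 - 1 = p - 3 from by omega] at hg
  have hkey : (∑ k ∈ range ((p+1)/2), (k:ℚ)^(p-3) - 7/2 * p * bernoulli (p-3) : ℚ)
      = (∑ k ∈ range ((p+1)/2), (k:ℚ)^(p-3)
          - p * 2⁻¹ * (2*(2:ℚ)⁻¹^(p-3) - 1) * bernoulli (p-3))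
        + p * 2⁻¹ * bernoulli (p-3) * (2*(2:ℚ)⁻¹^(p-3) - 1 - 7) := by
    ring
  rw [hkey, Rat.cast_add]
  apply le_trans (Padic.nonarchimedean _ _)
  apply max_le hg
  have hsecond : ‖((p * 2⁻¹ * bernoulli (p-3) * (2*(2:ℚ)⁻¹^(p-3) - 1 - 7) : ℚ) : ℚ_[p])‖
      ≤ ((p:ℝ)⁻¹)^2 := by
    rw [Rat.cast_mul, norm_mul, Rat.cast_mul, norm_mul, Rat.cast_mul, norm_mul]
    rw [Rat.cast_natCast, nq_p', norm_two_inv hp5]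
    calc (p:ℝ)⁻¹ * 1 * ‖((bernoulli (p-3) : ℚ) : ℚ_[p])‖ * ‖((2*(2:ℚ)⁻¹^(p-3) - 1 - 7 : ℚ) : ℚ_[p])‖
        ≤ (p:ℝ)⁻¹ * 1 * 1 * (p:ℝ)⁻¹ := by
          apply mul_le_mul (by
            apply mul_le_mul le_rfl hB (norm_nonneg _) (by positivity)) (x7_norm1 hp5)
            (norm_nonneg _) (by positivity)
      _ = ((p:ℝ)⁻¹)^2 := by ring
  exact hsecond

lemma A2_cong (hp5 : 5 ≤ p) :
    ‖((∑ k ∈ range ((p+1)/2), (k:ℚ)^(2*p-4) - 7/2 * p * bernoulli (2*p-4) : ℚ) : ℚ_[p])‖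
      ≤ ((p:ℝ)⁻¹)^2 := by
  have hB : ‖((bernoulli (2*p-4) : ℚ) : ℚ_[p])‖ ≤ 1 := by
    have := bern_int hp5 (2*p-4) (by omega)
    rwa [if_neg (by omega)] at this
  have hodd : Odd (2*p-3) := ⟨p-2, by omega⟩
  have hnp : ¬ p ∣ (2*p-3) := by
    intro h
    have h2 : p ∣ (2*p - 3) - p := Nat.dvd_sub h ⟨1, by ring⟩
    rw [show (2*p-3) - p = p - 3 from by omega] at h2
    exact absurd (Nat.le_of_dvd (by omega) h2) (by omega)
  have hg := half_gen hp5 (2*p-3) (by omega) hodd hnp ?hc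
  case hc =>
    intro i hi
    have hi' := mem_range.mp hi
    rw [Rat.cast_mul, norm_mul, Rat.cast_natCast]
    rcases eq_or_ne i (p-1) with rfl | hne
    · have hb : ‖((bernoulli (p-1) : ℚ) : ℚ_[p])‖ ≤ (p:ℝ) := by
        have := bern_int hp5 (p-1) (by omega)
        rwa [if_pos rfl] at this
      have hdvd : p ∣ (2*p-3).choose (p-1) :=
        Nat.Prime.dvd_choose hpf.out (by omega) (by omega) (by omega)
      have hc : ‖(((2*p-3).choose (p-1) : ℕ) : ℚ_[p])‖ ≤ (p:ℝ)⁻¹ := by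
        have := nqn_dvd (p := p) (m := 1) (by simpa using hdvd)
        rwa [pow_one] at this
      calc ‖(((2*p-3).choose (p-1) : ℕ) : ℚ_[p])‖ * ‖((bernoulli (p-1) : ℚ) : ℚ_[p])‖
          ≤ (p:ℝ)⁻¹ * (p:ℝ) := mul_le_mul hc hb (norm_nonneg _) pinv_pos.le
        _ = 1 := by field_simp
    · have hb : ‖((bernoulli i : ℚ) : ℚ_[p])‖ ≤ 1 := by
        have := bern_int hp5 i (by omega)
        rwa [if_neg hne] at this
      calc ‖(((2*p-3).choose i : ℕ) : ℚ_[p])‖ * ‖((bernoulli i : ℚ) : ℚ_[p])‖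
          ≤ 1 * 1 := mul_le_mul (nqn _) hb (norm_nonneg _) zero_le_one
        _ = 1 := by norm_num
  rw [show 2*p - 3 - 1 = 2*p - 4 from by omega] at hg
  have hkey : (∑ k ∈ range ((p+1)/2), (k:ℚ)^(2*p-4) - 7/2 * p * bernoulli (2*p-4) : ℚ)
      = (∑ k ∈ range ((p+1)/2), (k:ℚ)^(2*p-4)
          - p * 2⁻¹ * (2*(2:ℚ)⁻¹^(2*p-4) - 1) * bernoulli (2*p-4))
        + p * 2⁻¹ * bernoulli (2*p-4) * (2*(2:ℚ)⁻¹^(2*p-4) - 1 - 7) := by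
    ring
  rw [hkey, Rat.cast_add]
  apply le_trans (Padic.nonarchimedean _ _)
  apply max_le hg
  rw [Rat.cast_mul, norm_mul, Rat.cast_mul, norm_mul, Rat.cast_mul, norm_mul]
  rw [Rat.cast_natCast, nq_p', norm_two_inv hp5]
  calc (p:ℝ)⁻¹ * 1 * ‖((bernoulli (2*p-4) : ℚ) : ℚ_[p])‖ * ‖((2*(2:ℚ)⁻¹^(2*p-4) - 1 - 7 : ℚ) : ℚ_[p])‖
      ≤ (p:ℝ)⁻¹ * 1 * 1 * (p:ℝ)⁻¹ := by
        apply mul_le_mul (by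
          apply mul_le_mul le_rfl hB (norm_nonneg _) (by positivity)) (x7_norm2 hp5)
          (norm_nonneg _) (by positivity)
    _ = ((p:ℝ)⁻¹)^2 := by ring

lemma one_add_p_pow_sub_one_norm (t : ℕ) : ‖(((1+p:ℚ)^t - 1 : ℚ) : ℚ_[p])‖ ≤ (p:ℝ)⁻¹ := by
  have hd : (p:ℤ)^1 ∣ ((1+p:ℤ)^t - 1) := by
    rw [pow_one]
    induction t with
    | zero => simp
    | succ t ih =>
      have : ((1+p:ℤ))^(t+1) - 1 = ((1+p:ℤ)^t - 1) * (1+p) + p := by ring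
      rw [this]
      exact dvd_add (Dvd.dvd.mul_right ih _) dvd_rfl
  have h2 : (((1+p:ℚ)^t - 1 : ℚ)) = (((1+p:ℤ)^t - 1 : ℤ) : ℚ) := by push_cast; ring
  rw [h2, Rat.cast_intCast]
  have := (Padic.norm_int_le_pow_iff_dvd (p := p) ((1+p:ℤ)^t - 1) 1).mpr hd
  rwa [zpow_neg, zpow_natCast, pow_one] at this

lemma A3_cong (hp5 : 5 ≤ p) :
    ‖((∑ k ∈ range ((p+1)/2), (k:ℚ)^(p-4) + 2 * bernoulli (p-3) : ℚ) : ℚ_[p])‖ ≤ (p:ℝ)⁻¹ := by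
  set M : ℕ := (p+1)/2 with hMdef
  have hModd : Odd p := hpf.out.odd_of_ne_two (by omega)
  have hM2 : (M:ℚ) = 2⁻¹ * (1+p) := by
    obtain ⟨r, hr⟩ := hModd
    have h1 : 2 * M = p + 1 := by rw [hMdef]; omega
    have h2 : ((2 * M : ℕ) : ℚ) = ((p + 1 : ℕ) : ℚ) := by rw [h1]
    push_cast at h2
    linarith
  have hN1 : p - 4 + 1 = p - 3 := by omega
  have hfa : ∑ k ∈ range M, (k:ℚ)^(p-4)
      = ∑ i ∈ range (p-3), bernoulli i * (((p-3).choose i : ℕ) : ℚ) * (M:ℚ)^(p-3-i) / ((p-3 : ℕ) : ℚ) := by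
    have h := sum_range_pow M (p-4)
    simp only [hN1] at h
    have hcst : ((p-4:ℕ):ℚ) + 1 = ((p-3:ℕ):ℚ) := by
      rw [Nat.cast_sub (by omega : 4 ≤ p), Nat.cast_sub (by omega : 3 ≤ p)]; push_cast; ring
    rw [hcst] at h
    exact h
  have hp3ne : ((p-3 : ℕ) : ℚ) ≠ 0 := by
    have : 0 < p - 3 := by omega
    positivity
  have hkey : (∑ k ∈ range M, (k:ℚ)^(p-4) + 2 * bernoulli (p-3) : ℚ)
      = ((∑ i ∈ range (p-3), bernoulli i * (((p-3).choose i : ℕ) : ℚ) * (M:ℚ)^(p-3-i))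
          + 2 * ((p-3 : ℕ) : ℚ) * bernoulli (p-3)) / ((p-3 : ℕ) : ℚ) := by
    rw [hfa, ← sum_div]
    field_simp
  rw [hkey, Rat.cast_div, norm_div]
  have hp3norm : ‖(((p-3 : ℕ) : ℚ) : ℚ_[p])‖ = 1 := by
    have := nqn_unit (p := p) (hndvd_sub hp5 (by omega : 0 < p - 3) (by omega))
    push_cast at this ⊢
    exact this
  rw [hp3norm, div_one]
  -- split into three pieces
  have hsplit : ((∑ i ∈ range (p-3), bernoulli i * (((p-3).choose i : ℕ) : ℚ) * (M:ℚ)^(p-3-i))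
          + 2 * ((p-3 : ℕ) : ℚ) * bernoulli (p-3) : ℚ)
      = (∑ i ∈ range (p-3), bernoulli i * (((p-3).choose i : ℕ) : ℚ) * (2:ℚ)⁻¹^(p-3-i)
            * ((1+p:ℚ)^(p-3-i) - 1))
        + ((2*(2:ℚ)⁻¹^(p-3) - 1 - 7) * bernoulli (p-3)
            + 2 * (p:ℚ) * bernoulli (p-3)) := by
    have hV := Vlem (p-3)
    have hterm : ∀ i ∈ range (p-3),
        bernoulli i * (((p-3).choose i : ℕ) : ℚ) * (M:ℚ)^(p-3-i)
          = bernoulli i * (((p-3).choose i : ℕ) : ℚ) * (2:ℚ)⁻¹^(p-3-i) * ((1+p:ℚ)^(p-3-i) - 1)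
            + (((p-3).choose i : ℕ) : ℚ) * bernoulli i * (2:ℚ)⁻¹^(p-3-i) := by
      intro i hi
      have : (M:ℚ)^(p-3-i) = (2:ℚ)⁻¹^(p-3-i) * (1+p:ℚ)^(p-3-i) := by
        rw [hM2, mul_pow]
      rw [this]; ring
    rw [sum_congr rfl hterm, sum_add_distrib, hV]
    have hc3 : ((p-3 : ℕ) : ℚ) = (p:ℚ) - 3 := by
      rw [Nat.cast_sub (by omega : 3 ≤ p)]; push_cast; ring
    rw [hc3]
    ring
  rw [hsplit, Rat.cast_add]
  apply le_trans (Padic.nonarchimedean _ _)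
  apply max_le
  · rw [Rat.cast_sum]
    apply IsUltrametricDist.norm_sum_le_of_forall_le_of_nonneg pinv_pos.le
    intro i hi
    rw [Rat.cast_mul, norm_mul, Rat.cast_mul, norm_mul, Rat.cast_mul, norm_mul, Rat.cast_natCast]
    have hb : ‖((bernoulli i : ℚ) : ℚ_[p])‖ ≤ 1 := by
      have hi' := mem_range.mp hi
      have := bern_int hp5 i (by omega)
      rwa [if_neg (by omega)] at this
    have h2i : ‖(((2:ℚ)⁻¹^(p-3-i) : ℚ) : ℚ_[p])‖ = 1 := norm_two_inv_pow hp5 _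
    have hE := one_add_p_pow_sub_one_norm (p := p) (p-3-i)
    calc ‖((bernoulli i : ℚ) : ℚ_[p])‖ * ‖(((p-3).choose i : ℕ) : ℚ_[p])‖
          * ‖(((2:ℚ)⁻¹^(p-3-i) : ℚ) : ℚ_[p])‖ * ‖(((1+p:ℚ)^(p-3-i) - 1 : ℚ) : ℚ_[p])‖
        ≤ 1 * 1 * 1 * (p:ℝ)⁻¹ := by
          apply mul_le_mul _ hE (norm_nonneg _) (by norm_num)
          rw [h2i]
          have hbb : ‖((bernoulli i : ℚ) : ℚ_[p])‖ * ‖(((p-3).choose i : ℕ) : ℚ_[p])‖ ≤ 1 * 1 :=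
            mul_le_mul hb (nqn _) (norm_nonneg _) zero_le_one
          calc ‖((bernoulli i : ℚ) : ℚ_[p])‖ * ‖(((p-3).choose i : ℕ) : ℚ_[p])‖ * 1
              ≤ (1 * 1) * 1 := mul_le_mul_of_nonneg_right hbb zero_le_one
            _ = 1 * 1 * 1 := by ring
      _ = (p:ℝ)⁻¹ := by ring
  · rw [Rat.cast_add]
    apply le_trans (Padic.nonarchimedean _ _)
    apply max_le
    · rw [Rat.cast_mul, norm_mul]
      have hB : ‖((bernoulli (p-3) : ℚ) : ℚ_[p])‖ ≤ 1 := by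
        have := bern_int hp5 (p-3) (by omega)
        rwa [if_neg (by omega)] at this
      calc ‖((2*(2:ℚ)⁻¹^(p-3) - 1 - 7 : ℚ) : ℚ_[p])‖ * ‖((bernoulli (p-3) : ℚ) : ℚ_[p])‖
          ≤ (p:ℝ)⁻¹ * 1 := mul_le_mul (x7_norm1 hp5) hB (norm_nonneg _) pinv_pos.le
        _ = (p:ℝ)⁻¹ := by ring
    · rw [Rat.cast_mul, norm_mul, Rat.cast_mul, norm_mul, Rat.cast_natCast]
      have hB : ‖((bernoulli (p-3) : ℚ) : ℚ_[p])‖ ≤ 1 := by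
        have := bern_int hp5 (p-3) (by omega)
        rwa [if_neg (by omega)] at this
      have h2 : ‖((2:ℚ) : ℚ_[p])‖ ≤ 1 := by
        have := nqn (p := p) 2
        push_cast at this ⊢; exact this
      calc ‖((2:ℚ) : ℚ_[p])‖ * ‖((p:ℕ) : ℚ_[p])‖ * ‖((bernoulli (p-3) : ℚ) : ℚ_[p])‖
          ≤ 1 * (p:ℝ)⁻¹ * 1 := by
            apply mul_le_mul _ hB (norm_nonneg _) (by positivity)
            rw [nq_p']
            exact mul_le_mul_of_nonneg_right h2 pinv_pos.le
        _ = (p:ℝ)⁻¹ := by ring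

end Inst2

section Split
variable {p : ℕ} [hpf : Fact p.Prime]

lemma range_to_Icc (m : ℕ) (f : ℕ → ℚ) (h0 : f 0 = 0) :
    ∑ k ∈ range (m+1), f k = ∑ k ∈ Icc 1 m, f k := by
  have h1 : range (m+1) = insert 0 (Icc 1 m) := by
    ext k
    simp only [mem_range, mem_insert, mem_Icc]
    omega
  rw [h1, sum_insert (by simp), h0, zero_add]

lemma sum_split (hp5 : 5 ≤ p) (f : ℕ → ℚ) :
    ∑ k ∈ Icc 1 (p-1), f k = ∑ j ∈ Icc 1 ((p-1)/2), (f (2*j) + f (p - 2*j)) := by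
  obtain ⟨r, hr⟩ := hpf.out.odd_of_ne_two (by omega)
  set m := (p-1)/2 with hm
  have hmr : m = r := by omega
  have himg : Icc 1 (p-1) = ((Icc 1 m).image (fun j => 2*j)) ∪ ((Icc 1 m).image (fun j => p - 2*j)) := by
    ext k
    simp only [mem_union, mem_image, mem_Icc]
    constructor
    · rintro ⟨h1, h2⟩
      rcases Nat.even_or_odd k with he | ho
      · obtain ⟨t, ht⟩ := he
        exact Or.inl ⟨t, by omega, by omega⟩
      · obtain ⟨t, ht⟩ := ho
        exact Or.inr ⟨r - t, by omega, by omega⟩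
    · rintro (⟨j, hj, rfl⟩ | ⟨j, hj, rfl⟩) <;> omega
  have hdisj : Disjoint ((Icc 1 m).image (fun j => 2*j)) ((Icc 1 m).image (fun j => p - 2*j)) := by
    rw [Finset.disjoint_left]
    rintro k hk1 hk2
    obtain ⟨j1, hj1, he1⟩ := mem_image.mp hk1
    obtain ⟨j2, hj2, he2⟩ := mem_image.mp hk2
    rw [mem_Icc] at hj1 hj2
    omega
  rw [himg, sum_union hdisj, sum_image ?inj1, sum_image ?inj2, ← sum_add_distrib]
  case inj1 =>
    intro a _ b _ h
    simp only at h
    omega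
  case inj2 =>
    intro a ha b hb h
    rw [Finset.mem_coe, mem_Icc] at ha hb
    simp only at h
    omega

-- pointwise lemmas
lemma pw1 (hp5 : 5 ≤ p) {k : ℕ} (h1 : 1 ≤ k) (h2 : k ≤ p - 1) :
    ‖((1/(k:ℚ)^2 - (2*(k:ℚ)^(p-3) - (k:ℚ)^(2*p-4)) : ℚ) : ℚ_[p])‖ ≤ ((p:ℝ)⁻¹)^2 := by
  have hkQ : (k:ℚ) ≠ 0 := by positivity
  have hdvd : ¬ p ∣ k := by
    intro h
    have := Nat.le_of_dvd (by omega) h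
    omega
  have hid : (1/(k:ℚ)^2 - (2*(k:ℚ)^(p-3) - (k:ℚ)^(2*p-4)) : ℚ)
      = ((k:ℚ)^(p-1) - 1)^2 / (k:ℚ)^2 := by
    have e1 : p - 1 = (p-3) + 2 := by omega
    have e2 : 2*p - 4 = 2*(p-3) + 2 := by omega
    rw [e1, e2]
    field_simp
    ring
  rw [hid, Rat.cast_div, norm_div, Rat.cast_pow, norm_pow, Rat.cast_pow, norm_pow]
  have hkn : ‖((k:ℚ) : ℚ_[p])‖ = 1 := by
    have := nqn_unit (p := p) hdvd
    push_cast at this ⊢; exact this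
  rw [hkn, one_pow, div_one]
  have hf : ‖(((k:ℚ)^(p-1) - 1 : ℚ) : ℚ_[p])‖ ≤ (p:ℝ)⁻¹ := by
    have := fermat_norm (p := p) hdvd
    have hc : (((k:ℚ)^(p-1) - 1 : ℚ) : ℚ_[p]) = (k : ℚ_[p])^(p-1) - 1 := by push_cast; ring
    rw [hc]; exact this
  calc ‖(((k:ℚ)^(p-1) - 1 : ℚ) : ℚ_[p])‖^2 ≤ ((p:ℝ)⁻¹)^2 :=
        pow_le_pow_left₀ (norm_nonneg _) hf 2
    _ = ((p:ℝ)⁻¹)^2 := rfl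

lemma pw3 (hp5 : 5 ≤ p) {k : ℕ} (h1 : 1 ≤ k) (h2 : 2*k ≤ p - 1) :
    ‖(((k:ℚ)^(p-4) - 1/(k:ℚ)^3 : ℚ) : ℚ_[p])‖ ≤ (p:ℝ)⁻¹ := by
  have hkQ : (k:ℚ) ≠ 0 := by positivity
  have hdvd : ¬ p ∣ k := by
    intro h
    have := Nat.le_of_dvd (by omega) h
    omega
  have hid : ((k:ℚ)^(p-4) - 1/(k:ℚ)^3 : ℚ) = ((k:ℚ)^(p-1) - 1) / (k:ℚ)^3 := by
    have e1 : p - 1 = (p-4) + 3 := by omega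
    rw [e1]
    field_simp
    ring
  rw [hid, Rat.cast_div, norm_div, Rat.cast_pow, norm_pow]
  have hkn : ‖((k:ℚ) : ℚ_[p])‖ = 1 := by
    have := nqn_unit (p := p) hdvd
    push_cast at this ⊢; exact this
  rw [hkn, one_pow, div_one]
  have := fermat_norm (p := p) hdvd
  have hc : (((k:ℚ)^(p-1) - 1 : ℚ) : ℚ_[p]) = (k : ℚ_[p])^(p-1) - 1 := by push_cast; ring
  rw [hc]; exact this

lemma pw2 (hp5 : 5 ≤ p) {j : ℕ} (h1 : 1 ≤ j) (h2 : 2*j ≤ p - 1) :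
    ‖((1/((2*j : ℕ):ℚ)^2 + 1/((p - 2*j : ℕ):ℚ)^2
        - (2 * (1/((2*j : ℕ):ℚ)^2) + 2*p * (1/((2*j : ℕ):ℚ)^3)) : ℚ) : ℚ_[p])‖
      ≤ ((p:ℝ)⁻¹)^2 := by
  have hc1 : ((2*j : ℕ):ℚ) = 2*(j:ℚ) := by push_cast; ring
  have hc2 : ((p - 2*j : ℕ):ℚ) = (p:ℚ) - 2*j := by
    rw [Nat.cast_sub (by omega : 2*j ≤ p)]; push_cast; ring
  have hjne : (2*(j:ℚ)) ≠ 0 := by positivity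
  have hpjne : ((p:ℚ) - 2*(j:ℚ)) ≠ 0 := by
    have h3 : ((p - 2*j : ℕ) : ℚ) ≠ 0 := by
      have : 0 < p - 2*j := by omega
      positivity
    rw [hc2] at h3
    exact h3
  have hid : (1/((2*j : ℕ):ℚ)^2 + 1/((p - 2*j : ℕ):ℚ)^2
      - (2 * (1/((2*j : ℕ):ℚ)^2) + 2*p * (1/((2*j : ℕ):ℚ)^3)) : ℚ)
      = (p:ℚ)^2 * (3*(2*(j:ℚ)) - 2*p) / ((2*(j:ℚ))^3 * ((p:ℚ) - 2*(j:ℚ))^2) := by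
    rw [hc1, hc2]
    field_simp
    ring
  rw [hid, Rat.cast_div, norm_div, Rat.cast_mul, norm_mul]
  have hnum1 : ‖(((p:ℚ)^2 : ℚ) : ℚ_[p])‖ = ((p:ℝ)⁻¹)^2 := by
    rw [Rat.cast_pow, norm_pow, Rat.cast_natCast, nq_p']
  have hnum2 : ‖((3*(2*(j:ℚ)) - 2*p : ℚ) : ℚ_[p])‖ ≤ 1 := by
    have : ((3*(2*(j:ℚ)) - 2*p : ℚ)) = (((6*j : ℤ) - 2*p : ℤ) : ℚ) := by push_cast; ring
    rw [this, Rat.cast_intCast]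
    exact Padic.norm_int_le_one _
  have hden : ‖(((2*(j:ℚ))^3 * ((p:ℚ) - 2*(j:ℚ))^2 : ℚ) : ℚ_[p])‖ = 1 := by
    rw [Rat.cast_mul, norm_mul, Rat.cast_pow, norm_pow, Rat.cast_pow, norm_pow]
    have hu1 : ‖((2*(j:ℚ) : ℚ) : ℚ_[p])‖ = 1 := by
      rw [← hc1]
      have := nqn_unit (p := p) (n := 2*j) (by
        intro h
        have := Nat.le_of_dvd (by omega) h
        omega)
      push_cast at this ⊢; exact this
    have hu2 : ‖(((p:ℚ) - 2*(j:ℚ) : ℚ) : ℚ_[p])‖ = 1 := by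
      rw [← hc2]
      have := nqn_unit (p := p) (n := p - 2*j) (by
        intro h
        have := Nat.le_of_dvd (by omega) h
        omega)
      push_cast at this ⊢; exact this
    rw [hu1, hu2]
    norm_num
  rw [hden, div_one]
  calc ‖(((p:ℚ)^2 : ℚ) : ℚ_[p])‖ * ‖((3*(2*(j:ℚ)) - 2*p : ℚ) : ℚ_[p])‖
      ≤ ((p:ℝ)⁻¹)^2 * 1 := by
        rw [hnum1]
        exact mul_le_mul_of_nonneg_left hnum2 (by positivity)
    _ = ((p:ℝ)⁻¹)^2 := by ring

end Split

lemma nq_dvd_rev {p : ℕ} [hpf : Fact p.Prime] {z : ℤ} {n : ℕ}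
    (h : ‖((z : ℚ) : ℚ_[p])‖ ≤ ((p:ℝ)⁻¹)^n) : (p:ℤ)^n ∣ z := by
  rw [Rat.cast_intCast] at h
  apply (Padic.norm_int_le_pow_iff_dvd (p := p) z n).mp
  rwa [zpow_neg, zpow_natCast, ← inv_pow]


section Final
variable {p : ℕ} [hpf : Fact p.Prime]

lemma norm_cast_mul_le (r x : ℚ) {C : ℝ} (hr : ‖((r:ℚ) : ℚ_[p])‖ ≤ 1)
    (hx : ‖((x:ℚ) : ℚ_[p])‖ ≤ C) : ‖((r * x : ℚ) : ℚ_[p])‖ ≤ C := by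
  have hC : 0 ≤ C := le_trans (norm_nonneg _) hx
  rw [Rat.cast_mul, norm_mul]
  calc ‖((r:ℚ) : ℚ_[p])‖ * ‖((x:ℚ) : ℚ_[p])‖ ≤ 1 * C :=
        mul_le_mul hr hx (norm_nonneg _) zero_le_one
    _ = C := by ring

lemma tri2 {x y : ℚ} {C : ℝ} (hx : ‖((x:ℚ) : ℚ_[p])‖ ≤ C) (hy : ‖((y:ℚ) : ℚ_[p])‖ ≤ C) :
    ‖((x + y : ℚ) : ℚ_[p])‖ ≤ C := by
  rw [Rat.cast_add]
  exact le_trans (Padic.nonarchimedean _ _) (max_le hx hy)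

lemma ratCongr_of_norm (hp5 : 5 ≤ p) (q : ℚ) (h : ‖(q : ℚ_[p])‖ ≤ ((p:ℝ)⁻¹)^2) :
    ∃ a b : ℤ, ¬ (p : ℤ) ∣ b ∧ q * (b : ℚ) = (p : ℚ) ^ 2 * (a : ℚ) := by
  have hp1 : ¬ (p:ℤ) ∣ 1 := by
    intro hd
    have := Int.le_of_dvd one_pos hd
    omega
  rcases eq_or_ne q 0 with rfl | hq
  · exact ⟨0, 1, hp1, by norm_num⟩
  -- p^2 ∣ q.num
  have hdenne : ((q.den : ℚ) : ℚ_[p]) ≠ 0 := by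
    rw [Rat.cast_natCast]
    exact_mod_cast (Nat.cast_ne_zero (R := ℚ_[p])).mpr q.den_nz
  have hnum_eq : ((q.num : ℚ) : ℚ_[p]) = (q : ℚ_[p]) * ((q.den : ℚ) : ℚ_[p]) := by
    have hdq : ((q.den : ℚ)) ≠ 0 := by
      exact_mod_cast q.den_nz
    have h1 : (q.num : ℚ) = q * (q.den : ℚ) := by
      have h0 := Rat.num_div_den q
      rwa [div_eq_iff hdq] at h0
    rw [h1]
    push_cast
    ring
  have hnum_norm : ‖((q.num : ℚ) : ℚ_[p])‖ ≤ ((p:ℝ)⁻¹)^2 := by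
    rw [hnum_eq, norm_mul]
    calc ‖(q : ℚ_[p])‖ * ‖((q.den : ℚ) : ℚ_[p])‖ ≤ ((p:ℝ)⁻¹)^2 * 1 := by
          apply mul_le_mul h _ (norm_nonneg _) (by positivity)
          rw [Rat.cast_natCast]
          exact nqn _
      _ = ((p:ℝ)⁻¹)^2 := by ring
  have hdvd : (p:ℤ)^2 ∣ q.num := by
    have h2 := nq_dvd_rev (p := p) hnum_norm
    exact h2
  have hden : ¬ (p:ℤ) ∣ (q.den : ℤ) := by
    intro hd
    have hpd : p ∣ q.den := by exact_mod_cast hd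
    have hpn : (p:ℤ) ∣ q.num := dvd_trans ⟨p, by ring⟩ hdvd
    have hpn' : p ∣ q.num.natAbs := by
      rw [Int.natCast_dvd_natCast.symm]
      exact (Int.dvd_natAbs).mpr hpn
    have hcop := q.reduced
    have : p ∣ Nat.gcd q.num.natAbs q.den := Nat.dvd_gcd hpn' hpd
    rw [hcop] at this
    have := Nat.le_of_dvd one_pos this
    omega
  obtain ⟨a, ha⟩ := hdvd
  refine ⟨a, q.den, hden, ?_⟩
  have hdq : ((q.den : ℚ)) ≠ 0 := by
    exact_mod_cast q.den_nz
  have h1 : (q.num : ℚ) = q * (q.den : ℚ) := by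
    have h0 := Rat.num_div_den q
    rwa [div_eq_iff hdq] at h0
  have h2 : ((q.num : ℤ) : ℚ) = (((p:ℤ)^2 * a : ℤ) : ℚ) := by exact_mod_cast congrArg (fun z : ℤ => (z : ℚ)) ha
  push_cast at h2
  rw [h1] at h2
  push_cast
  linarith [h2]

end Final

section SC
variable {p : ℕ} [hpf : Fact p.Prime]

lemma SC1 (hp5 : 5 ≤ p) :
    ‖((∑ k ∈ Icc 1 ((p-1)/2), 1/(k:ℚ)^2
        - (2 * (∑ k ∈ range ((p+1)/2), (k:ℚ)^(p-3)) - ∑ k ∈ range ((p+1)/2), (k:ℚ)^(2*p-4)) : ℚ) : ℚ_[p])‖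
      ≤ ((p:ℝ)⁻¹)^2 := by
  obtain ⟨r, hr⟩ := hpf.out.odd_of_ne_two (by omega)
  have hM : (p-1)/2 + 1 = (p+1)/2 := by omega
  have e1 := range_to_Icc ((p-1)/2) (fun k => (k:ℚ)^(p-3))
    (by simp [zero_pow (show p - 3 ≠ 0 by omega)])
  have e2 := range_to_Icc ((p-1)/2) (fun k => (k:ℚ)^(2*p-4))
    (by simp [zero_pow (show 2*p - 4 ≠ 0 by omega)])
  rw [hM] at e1 e2
  rw [e1, e2]
  have hid : (∑ k ∈ Icc 1 ((p-1)/2), 1/(k:ℚ)^2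
      - (2 * (∑ k ∈ Icc 1 ((p-1)/2), (k:ℚ)^(p-3)) - ∑ k ∈ Icc 1 ((p-1)/2), (k:ℚ)^(2*p-4)) : ℚ)
      = ∑ k ∈ Icc 1 ((p-1)/2), (1/(k:ℚ)^2 - (2*(k:ℚ)^(p-3) - (k:ℚ)^(2*p-4))) := by
    rw [sum_sub_distrib, sum_sub_distrib, ← mul_sum]
  rw [hid, Rat.cast_sum]
  apply IsUltrametricDist.norm_sum_le_of_forall_le_of_nonneg (by positivity)
  intro k hk
  have hk' := mem_Icc.mp hk
  exact pw1 hp5 hk'.1 (by omega)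

lemma SC2 (hp5 : 5 ≤ p) :
    ‖((∑ k ∈ Icc 1 (p-1), 1/(k:ℚ)^2
        - (2 * (∑ k ∈ range p, (k:ℚ)^(p-3)) - ∑ k ∈ range p, (k:ℚ)^(2*p-4)) : ℚ) : ℚ_[p])‖
      ≤ ((p:ℝ)⁻¹)^2 := by
  have hM : (p-1) + 1 = p := by omega
  have e1 := range_to_Icc (p-1) (fun k => (k:ℚ)^(p-3))
    (by simp [zero_pow (show p - 3 ≠ 0 by omega)])
  have e2 := range_to_Icc (p-1) (fun k => (k:ℚ)^(2*p-4))
    (by simp [zero_pow (show 2*p - 4 ≠ 0 by omega)])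
  rw [hM] at e1 e2
  rw [e1, e2]
  have hid : (∑ k ∈ Icc 1 (p-1), 1/(k:ℚ)^2
      - (2 * (∑ k ∈ Icc 1 (p-1), (k:ℚ)^(p-3)) - ∑ k ∈ Icc 1 (p-1), (k:ℚ)^(2*p-4)) : ℚ)
      = ∑ k ∈ Icc 1 (p-1), (1/(k:ℚ)^2 - (2*(k:ℚ)^(p-3) - (k:ℚ)^(2*p-4))) := by
    rw [sum_sub_distrib, sum_sub_distrib, ← mul_sum]
  rw [hid, Rat.cast_sum]
  apply IsUltrametricDist.norm_sum_le_of_forall_le_of_nonneg (by positivity)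
  intro k hk
  have hk' := mem_Icc.mp hk
  exact pw1 hp5 hk'.1 hk'.2

lemma SC9 (hp5 : 5 ≤ p) :
    ‖((∑ k ∈ Icc 1 ((p-1)/2), 1/(k:ℚ)^3 - ∑ k ∈ range ((p+1)/2), (k:ℚ)^(p-4) : ℚ) : ℚ_[p])‖
      ≤ (p:ℝ)⁻¹ := by
  obtain ⟨r, hr⟩ := hpf.out.odd_of_ne_two (by omega)
  have hM : (p-1)/2 + 1 = (p+1)/2 := by omega
  have e1 := range_to_Icc ((p-1)/2) (fun k => (k:ℚ)^(p-4))
    (by simp [zero_pow (show p - 4 ≠ 0 by omega)])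
  rw [hM] at e1
  rw [e1]
  rw [← sum_sub_distrib, Rat.cast_sum]
  apply IsUltrametricDist.norm_sum_le_of_forall_le_of_nonneg pinv_pos.le
  intro k hk
  have hk' := mem_Icc.mp hk
  have := pw3 (p := p) hp5 hk'.1 (by omega)
  have hneg : ((1/(k:ℚ)^3 - (k:ℚ)^(p-4) : ℚ) : ℚ_[p]) = -(((k:ℚ)^(p-4) - 1/(k:ℚ)^3 : ℚ) : ℚ_[p]) := by
    push_cast
    ring
  rw [hneg, norm_neg]
  exact this

lemma SC8 (hp5 : 5 ≤ p) :
    ‖((∑ k ∈ Icc 1 (p-1), 1/(k:ℚ)^2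
        - (1/2 * (∑ k ∈ Icc 1 ((p-1)/2), 1/(k:ℚ)^2) + p/4 * (∑ k ∈ Icc 1 ((p-1)/2), 1/(k:ℚ)^3)) : ℚ) : ℚ_[p])‖
      ≤ ((p:ℝ)⁻¹)^2 := by
  rw [sum_split hp5 (fun k => 1/(k:ℚ)^2)]
  have e1 : (1/2 * (∑ k ∈ Icc 1 ((p-1)/2), 1/(k:ℚ)^2) + (p:ℚ)/4 * (∑ k ∈ Icc 1 ((p-1)/2), 1/(k:ℚ)^3) : ℚ)
      = ∑ j ∈ Icc 1 ((p-1)/2), (2 * (1/((2*j : ℕ):ℚ)^2) + 2*(p:ℚ) * (1/((2*j : ℕ):ℚ)^3)) := by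
    rw [mul_sum, mul_sum, ← sum_add_distrib]
    apply sum_congr rfl
    intro j hj
    have hj1 := (mem_Icc.mp hj).1
    have hc1 : ((2*j : ℕ):ℚ) = 2*(j:ℚ) := by push_cast; ring
    have hjne : (j:ℚ) ≠ 0 := by positivity
    rw [hc1]
    field_simp
    ring
  rw [e1, ← sum_sub_distrib, Rat.cast_sum]
  apply IsUltrametricDist.norm_sum_le_of_forall_le_of_nonneg (by positivity)
  intro j hj
  have hj' := mem_Icc.mp hj
  exact pw2 hp5 hj'.1 (by omega)

end SC


/-- Z.-H. Sun: for primes `p ≥ 5`,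
`H^{(2)}_{(p-1)/2} ≡ (7/3) p B_{p-3} (mod p^2)`. -/
theorem stmt14 (p : ℕ) (hp : p.Prime) (hp5 : 5 ≤ p) :
    ratCongr (H2 ((p - 1) / 2)) (7 / 3 * (p : ℚ) * bernoulli (p - 3)) p 2 := by
  haveI hpf : Fact p.Prime := ⟨hp⟩
  have hp0 : (0:ℝ) < (p:ℝ) := by exact_mod_cast hp.pos
  -- constant norms
  have hc2 : ‖((2:ℚ) : ℚ_[p])‖ ≤ 1 := by
    have := nqn (p := p) 2; push_cast at this ⊢; exact this
  have hcm1 : ‖((-1:ℚ) : ℚ_[p])‖ ≤ 1 := by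
    rw [Rat.cast_neg, norm_neg, Rat.cast_one, norm_one]
  have hcm2 : ‖((-2:ℚ) : ℚ_[p])‖ ≤ 1 := by
    rw [show ((-2 : ℚ) : ℚ_[p]) = -((2:ℚ) : ℚ_[p]) from by push_cast; ring, norm_neg]
    exact hc2
  have hc3 : ‖((3:ℚ) : ℚ_[p])‖ = 1 := by
    have := nqn_unit (p := p) (n := 3) (by intro h; have := Nat.le_of_dvd (by norm_num) h; omega)
    push_cast at this ⊢; exact this
  have hc23 : ‖((2/3:ℚ) : ℚ_[p])‖ ≤ 1 := by
    rw [show ((2/3 : ℚ) : ℚ_[p]) = ((2:ℚ) : ℚ_[p]) / ((3:ℚ) : ℚ_[p]) from by push_cast; ring,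
      norm_div, hc3, div_one]
    exact hc2
  have hcm23 : ‖((-(2/3) : ℚ) : ℚ_[p])‖ ≤ 1 := by
    rw [Rat.cast_neg, norm_neg]; exact hc23
  have hc72 : ‖((-(7/2) : ℚ) : ℚ_[p])‖ ≤ 1 := by
    have h2u : ‖((2:ℚ) : ℚ_[p])‖ = 1 := by
      have := nqn_unit (p := p) (n := 2) (by intro h; have := Nat.le_of_dvd (by norm_num) h; omega)
      push_cast at this ⊢; exact this
    have h7 : ‖((7:ℚ) : ℚ_[p])‖ ≤ 1 := by
      have := nqn (p := p) 7; push_cast at this ⊢; exact this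
    rw [Rat.cast_neg, norm_neg,
      show ((7/2 : ℚ) : ℚ_[p]) = ((7:ℚ) : ℚ_[p]) / ((2:ℚ) : ℚ_[p]) from by push_cast; ring,
      norm_div, h2u, div_one]
    exact h7
  have hp4 : ‖(((p:ℚ)/4 : ℚ) : ℚ_[p])‖ ≤ (p:ℝ)⁻¹ := by
    have h4 : ‖((4:ℚ) : ℚ_[p])‖ = 1 := by
      have := nqn_unit (p := p) (n := 4) (by intro h; have := Nat.le_of_dvd (by norm_num) h; omega)
      push_cast at this ⊢; exact this
    rw [show (((p:ℚ)/4 : ℚ) : ℚ_[p]) = (((p:ℚ):ℚ) : ℚ_[p]) / ((4:ℚ) : ℚ_[p]) from by push_cast; ring,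
      norm_div, h4, div_one, Rat.cast_natCast]
    exact le_of_eq Padic.norm_p
  -- congruences
  have hA1 := A1_cong (p := p) hp5
  have hA2 := A2_cong (p := p) hp5
  have hA3 := A3_cong (p := p) hp5
  have hF1 := F1_cong (p := p) hp5
  have hF2 := F2_cong (p := p) hp5
  have hSC1 := SC1 (p := p) hp5
  have hSC2 := SC2 (p := p) hp5
  have hSC8 := SC8 (p := p) hp5
  have hSC9 := SC9 (p := p) hp5
  -- u1
  have u1 : ‖((∑ k ∈ Icc 1 ((p-1)/2), 1/(k:ℚ)^2
      - (7*(p:ℚ)*bernoulli (p-3) - 7/2*(p:ℚ)*bernoulli (2*p-4)) : ℚ) : ℚ_[p])‖ ≤ ((p:ℝ)⁻¹)^2 := by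
    have hid : (∑ k ∈ Icc 1 ((p-1)/2), 1/(k:ℚ)^2
        - (7*(p:ℚ)*bernoulli (p-3) - 7/2*(p:ℚ)*bernoulli (2*p-4)) : ℚ)
        = (∑ k ∈ Icc 1 ((p-1)/2), 1/(k:ℚ)^2
            - (2 * (∑ k ∈ range ((p+1)/2), (k:ℚ)^(p-3)) - ∑ k ∈ range ((p+1)/2), (k:ℚ)^(2*p-4)))
          + (2 * (∑ k ∈ range ((p+1)/2), (k:ℚ)^(p-3) - 7/2*(p:ℚ)*bernoulli (p-3))
             + (-1) * (∑ k ∈ range ((p+1)/2), (k:ℚ)^(2*p-4) - 7/2*(p:ℚ)*bernoulli (2*p-4))) := by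
      ring
    rw [hid]
    exact tri2 hSC1 (tri2 (norm_cast_mul_le _ _ hc2 hA1) (norm_cast_mul_le _ _ hcm1 hA2))
  -- u2
  have u2 : ‖((∑ k ∈ Icc 1 (p-1), 1/(k:ℚ)^2
      - (2*(p:ℚ)*bernoulli (p-3) - (p:ℚ)*bernoulli (2*p-4)) : ℚ) : ℚ_[p])‖ ≤ ((p:ℝ)⁻¹)^2 := by
    have hid : (∑ k ∈ Icc 1 (p-1), 1/(k:ℚ)^2
        - (2*(p:ℚ)*bernoulli (p-3) - (p:ℚ)*bernoulli (2*p-4)) : ℚ)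
        = (∑ k ∈ Icc 1 (p-1), 1/(k:ℚ)^2
            - (2 * (∑ k ∈ range p, (k:ℚ)^(p-3)) - ∑ k ∈ range p, (k:ℚ)^(2*p-4)))
          + (2 * (∑ k ∈ range p, (k:ℚ)^(p-3) - (p:ℚ)*bernoulli (p-3))
             + (-1) * (∑ k ∈ range p, (k:ℚ)^(2*p-4) - (p:ℚ)*bernoulli (2*p-4))) := by
      ring
    rw [hid]
    refine tri2 hSC2 (tri2 (norm_cast_mul_le _ _ hc2 ?_) (norm_cast_mul_le _ _ hcm1 ?_))
    · have := hF1
      convert this using 3 <;> push_cast <;> ring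
    · have := hF2
      convert this using 3 <;> push_cast <;> ring
  -- S3 + 2B
  have hS3B : ‖((∑ k ∈ Icc 1 ((p-1)/2), 1/(k:ℚ)^3 + 2*bernoulli (p-3) : ℚ) : ℚ_[p])‖
      ≤ (p:ℝ)⁻¹ := by
    have hid : (∑ k ∈ Icc 1 ((p-1)/2), 1/(k:ℚ)^3 + 2*bernoulli (p-3) : ℚ)
        = (∑ k ∈ Icc 1 ((p-1)/2), 1/(k:ℚ)^3 - ∑ k ∈ range ((p+1)/2), (k:ℚ)^(p-4))
          + (∑ k ∈ range ((p+1)/2), (k:ℚ)^(p-4) + 2*bernoulli (p-3)) := by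
      ring
    rw [hid]
    exact tri2 hSC9 hA3
  -- u3
  have u3 : ‖((∑ k ∈ Icc 1 (p-1), 1/(k:ℚ)^2
      - (1/2 * (∑ k ∈ Icc 1 ((p-1)/2), 1/(k:ℚ)^2) - 1/2*(p:ℚ)*bernoulli (p-3)) : ℚ) : ℚ_[p])‖
      ≤ ((p:ℝ)⁻¹)^2 := by
    have hid : (∑ k ∈ Icc 1 (p-1), 1/(k:ℚ)^2
        - (1/2 * (∑ k ∈ Icc 1 ((p-1)/2), 1/(k:ℚ)^2) - 1/2*(p:ℚ)*bernoulli (p-3)) : ℚ)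
        = (∑ k ∈ Icc 1 (p-1), 1/(k:ℚ)^2
            - (1/2 * (∑ k ∈ Icc 1 ((p-1)/2), 1/(k:ℚ)^2) + (p:ℚ)/4 * (∑ k ∈ Icc 1 ((p-1)/2), 1/(k:ℚ)^3)))
          + ((p:ℚ)/4) * (∑ k ∈ Icc 1 ((p-1)/2), 1/(k:ℚ)^3 + 2*bernoulli (p-3)) := by
      ring
    rw [hid]
    refine tri2 ?_ ?_
    · have := hSC8
      convert this using 3 <;> push_cast <;> ring
    · rw [Rat.cast_mul, norm_mul]
      calc ‖(((p:ℚ)/4 : ℚ) : ℚ_[p])‖ * ‖((∑ k ∈ Icc 1 ((p-1)/2), 1/(k:ℚ)^3 + 2*bernoulli (p-3) : ℚ) : ℚ_[p])‖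
          ≤ (p:ℝ)⁻¹ * (p:ℝ)⁻¹ := mul_le_mul hp4 hS3B (norm_nonneg _) pinv_pos.le
        _ = ((p:ℝ)⁻¹)^2 := by ring
  -- u4
  have u4 : ‖((∑ k ∈ Icc 1 ((p-1)/2), 1/(k:ℚ)^2
      - (5*(p:ℚ)*bernoulli (p-3) - 2*(p:ℚ)*bernoulli (2*p-4)) : ℚ) : ℚ_[p])‖ ≤ ((p:ℝ)⁻¹)^2 := by
    have hid : (∑ k ∈ Icc 1 ((p-1)/2), 1/(k:ℚ)^2
        - (5*(p:ℚ)*bernoulli (p-3) - 2*(p:ℚ)*bernoulli (2*p-4)) : ℚ)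
        = 2 * (∑ k ∈ Icc 1 (p-1), 1/(k:ℚ)^2
            - (2*(p:ℚ)*bernoulli (p-3) - (p:ℚ)*bernoulli (2*p-4)))
          + (-2) * (∑ k ∈ Icc 1 (p-1), 1/(k:ℚ)^2
            - (1/2 * (∑ k ∈ Icc 1 ((p-1)/2), 1/(k:ℚ)^2) - 1/2*(p:ℚ)*bernoulli (p-3))) := by
      ring
    rw [hid]
    exact tri2 (norm_cast_mul_le _ _ hc2 u2) (norm_cast_mul_le _ _ hcm2 u3)
  -- u5
  have u5 : ‖(((p:ℚ)*bernoulli (2*p-4) - 4/3*(p:ℚ)*bernoulli (p-3) : ℚ) : ℚ_[p])‖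
      ≤ ((p:ℝ)⁻¹)^2 := by
    have hid : ((p:ℚ)*bernoulli (2*p-4) - 4/3*(p:ℚ)*bernoulli (p-3) : ℚ)
        = (2/3) * (∑ k ∈ Icc 1 ((p-1)/2), 1/(k:ℚ)^2
            - (7*(p:ℚ)*bernoulli (p-3) - 7/2*(p:ℚ)*bernoulli (2*p-4)))
          + (-(2/3)) * (∑ k ∈ Icc 1 ((p-1)/2), 1/(k:ℚ)^2
            - (5*(p:ℚ)*bernoulli (p-3) - 2*(p:ℚ)*bernoulli (2*p-4))) := by
      ring
    rw [hid]
    exact tri2 (norm_cast_mul_le _ _ hc23 u1) (norm_cast_mul_le _ _ hcm23 u4)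
  -- final
  have hnorm : ‖((H2 ((p-1)/2) - 7/3 * (p:ℚ) * bernoulli (p-3) : ℚ) : ℚ_[p])‖ ≤ ((p:ℝ)⁻¹)^2 := by
    have hH2 : H2 ((p-1)/2) = ∑ k ∈ Icc 1 ((p-1)/2), 1/(k:ℚ)^2 := rfl
    rw [hH2]
    have hid : (∑ k ∈ Icc 1 ((p-1)/2), 1/(k:ℚ)^2 - 7/3 * (p:ℚ) * bernoulli (p-3) : ℚ)
        = (∑ k ∈ Icc 1 ((p-1)/2), 1/(k:ℚ)^2
            - (7*(p:ℚ)*bernoulli (p-3) - 7/2*(p:ℚ)*bernoulli (2*p-4)))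
          + (-(7/2)) * ((p:ℚ)*bernoulli (2*p-4) - 4/3*(p:ℚ)*bernoulli (p-3)) := by
      ring
    rw [hid]
    exact tri2 u1 (norm_cast_mul_le _ _ hc72 u5)
  exact ratCongr_of_norm hp5 _ hnorm
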